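/- arXiv:1907.07723 — 5 statements merged into one kernel-verified Lean document; each statement's English description precedes it below -/
import Mathlib

section
/- Let z* be a point of the probability simplex Δ ⊂ ℝ^d, let 0 ≤ θ ≤ 1/d, and let z*_p be the ℓ1-projection of z* onto the restricted simplex Δ_θ = {z : ‖z‖₁ = 1, z_i ≥ θ ∀i} (i.e., a minimizer of ‖z − z*‖₁ over z ∈ Δ_θ). Then ‖z*_p − z*‖₁ ≤ 2θ(d − 1). -/
open Finset

/-- If `z*` lies in the simplex `Δ ⊂ ℝ^d`, `0 ≤ θ ≤ 1/d`, and `z*_p` is an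
ℓ1-projection of `z*` onto the restricted simplex `Δ_θ`, then `‖z*_p − z*‖₁ ≤ 2θ(d−1)`. -/
theorem dist_proj_restricted_simplex (d : ℕ) (hd : 0 < d) (θ : ℝ)
    (hθ0 : 0 ≤ θ) (hθd : θ ≤ 1 / d)
    (zstar : Fin d → ℝ) (hz : zstar ∈ stdSimplex ℝ (Fin d))
    (zp : Fin d → ℝ)
    (hzp : zp ∈ {z : Fin d → ℝ | (∑ i, |z i|) = 1 ∧ ∀ i, θ ≤ z i})
    (hproj : ∀ z ∈ {z : Fin d → ℝ | (∑ i, |z i|) = 1 ∧ ∀ i, θ ≤ z i},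
      (∑ i, |zp i - zstar i|) ≤ ∑ i, |z i - zstar i|) :
    (∑ i, |zp i - zstar i|) ≤ 2 * θ * (d - 1) := by
  obtain ⟨hpos, hsum⟩ := hz
  have hd' : (1:ℝ) ≤ d := by exact_mod_cast hd
  have hdθ : (d:ℝ) * θ ≤ 1 := by
    calc (d:ℝ) * θ ≤ d * (1/d) := by nlinarith
    _ = 1 := by field_simp
  -- each coordinate ≤ 1
  have hle1 : ∀ i, zstar i ≤ 1 := by
    intro i
    have : zstar i ≤ ∑ j, zstar j :=
      Finset.single_le_sum (fun j _ => hpos j) (Finset.mem_univ i)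
    simpa [hsum] using this
  set w : Fin d → ℝ := fun i => (1 - d * θ) * zstar i + θ with hw
  have hwθ : ∀ i, θ ≤ w i := by
    intro i
    have : 0 ≤ (1 - (d:ℝ) * θ) * zstar i := by
      apply mul_nonneg (by linarith) (hpos i)
    simp only [hw]; linarith
  have hwnn : ∀ i, 0 ≤ w i := fun i => le_trans hθ0 (hwθ i)
  have hwsum : (∑ i, |w i|) = 1 := by
    have : (∑ i, |w i|) = ∑ i, w i := by
      exact Finset.sum_congr rfl fun i _ => abs_of_nonneg (hwnn i)
    rw [this]
    simp only [hw]
    rw [Finset.sum_add_distrib, ← Finset.mul_sum, hsum]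
    simp [Finset.card_univ]
  have hmem : w ∈ {z : Fin d → ℝ | (∑ i, |z i|) = 1 ∧ ∀ i, θ ≤ z i} :=
    ⟨hwsum, hwθ⟩
  have hdist : (∑ i, |w i - zstar i|) ≤ 2 * θ * (d - 1) := by
    have key : ∀ i, |w i - zstar i| ≤ θ * (1 + (d - 2) * zstar i) := by
      intro i
      have h1 : w i - zstar i = θ * (1 - d * zstar i) := by simp only [hw]; ring
      rw [h1, abs_mul, abs_of_nonneg hθ0]
      have : |1 - (d:ℝ) * zstar i| ≤ 1 + ((d:ℝ) - 2) * zstar i := by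
        rcases abs_cases (1 - (d:ℝ) * zstar i) with ⟨he, _⟩ | ⟨he, _⟩ <;>
          rw [he] <;> nlinarith [hpos i, hle1 i, hd']
      nlinarith [this, hθ0]
    calc (∑ i, |w i - zstar i|) ≤ ∑ i, θ * (1 + (d - 2) * zstar i) :=
          Finset.sum_le_sum fun i _ => key i
      _ = θ * (d + (d - 2) * 1) := by
          rw [← Finset.mul_sum, Finset.sum_add_distrib, ← Finset.mul_sum, hsum]
          simp [Finset.card_univ]
      _ = 2 * θ * (d - 1) := by ring
  exact le_trans (hproj w hmem) hdist
end

section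
/- (Follow-the-Leader saddle-point stability, upper bound.) Let L_1, ..., L_T : X × Y → ℝ be convex-concave functions on compact convex sets, each G-Lipschitz with respect to a norm ‖·‖ on the product, and for each t let (x_{t+1}, y_{t+1}) be a saddle point of Σ_{τ=1}^{t} L_τ. Then Σ_{t=1}^T L_t(x_{t+1}, y_{t+1}) − min_{x∈X} max_{y∈Y} Σ_{t=1}^T L_t(x, y) ≤ G·Σ_{t=1}^T ‖y_t − y_{t+1}‖, where (x_1, y_1) ∈ X × Y is arbitrary. -/
open Finset

/-- Follow-the-Leader saddle-point stability, upper bound. If `(x_{t+1}, y_{t+1})`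
is a saddle point of the partial sum `∑_{τ≤t} L_τ`, then the cumulative FTL value exceeds the
minimax value of the total sum by at most `G ∑ₜ ‖yₜ − y_{t+1}‖`. -/
theorem ftl_saddle_stability_upper
    {E F : Type*} [NormedAddCommGroup E] [NormedSpace ℝ E]
    [NormedAddCommGroup F] [NormedSpace ℝ F]
    (X : Set E) (Y : Set F)
    (hXc : IsCompact X) (hXconv : Convex ℝ X) (hXne : X.Nonempty)
    (hYc : IsCompact Y) (hYconv : Convex ℝ Y) (hYne : Y.Nonempty)
    (T : ℕ) (G : ℝ)
    (L : ℕ → E → F → ℝ)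
    (hconv : ∀ t, ∀ y ∈ Y, ConvexOn ℝ X (fun x => L t x y))
    (hconc : ∀ t, ∀ x ∈ X, ConcaveOn ℝ Y (fun y => L t x y))
    (hLip : ∀ t, ∀ x1 ∈ X, ∀ y1 ∈ Y, ∀ x2 ∈ X, ∀ y2 ∈ Y,
      |L t x1 y1 - L t x2 y2| ≤ G * ‖((x1 - x2 : E), (y1 - y2 : F))‖)
    (x : ℕ → E) (y : ℕ → F)
    (hxmem : ∀ t, x t ∈ X) (hymem : ∀ t, y t ∈ Y)
    -- `(x (t+1), y (t+1))` is a saddle point of `∑_{τ ≤ t} L τ`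
    (hsaddle : ∀ t < T, ∀ x' ∈ X, ∀ y' ∈ Y,
      (∑ τ ∈ range (t + 1), L τ (x (t + 1)) y') ≤ ∑ τ ∈ range (t + 1), L τ (x (t + 1)) (y (t + 1)) ∧
      (∑ τ ∈ range (t + 1), L τ (x (t + 1)) (y (t + 1))) ≤ ∑ τ ∈ range (t + 1), L τ x' (y (t + 1))) :
    (∑ t ∈ range T, L t (x (t + 1)) (y (t + 1))) -
      sInf ((fun x' => sSup ((fun y' => ∑ t ∈ range T, L t x' y') '' Y)) '' X) ≤
      G * ∑ t ∈ range T, ‖y t - y (t + 1)‖ := by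
  -- Lipschitz in the `y` variable only
  have hnorm : ∀ (d : F), ‖(((0:E)), d)‖ = ‖d‖ := by
    intro d
    rw [Prod.norm_def, norm_zero]
    exact max_eq_right (norm_nonneg d)
  have hLipY : ∀ t, ∀ x0 ∈ X, ∀ y1 ∈ Y, ∀ y2 ∈ Y,
      |L t x0 y1 - L t x0 y2| ≤ G * ‖y1 - y2‖ := by
    intro t x0 hx0 y1 hy1 y2 hy2
    have h := hLip t x0 hx0 y1 hy1 x0 hx0 y2 hy2
    rwa [sub_self, hnorm] at h
  rcases le_or_gt 0 G with hG | hG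
  · -- main case: G ≥ 0
    have key : ∀ n, n ≤ T →
        (∑ t ∈ range n, L t (x (t + 1)) (y (t + 1))) ≤
          (∑ τ ∈ range n, L τ (x n) (y n)) + G * ∑ t ∈ range n, ‖y t - y (t + 1)‖ := by
      intro n
      induction n with
      | zero => simp
      | succ n ih =>
        intro hn
        have hnT : n ≤ T := Nat.le_of_succ_le hn
        have ihn := ih hnT
        have hstep : (∑ τ ∈ range n, L τ (x n) (y n)) ≤
            (∑ τ ∈ range n, L τ (x (n + 1)) (y (n + 1))) + G * ‖y n - y (n + 1)‖ := by
          rcases Nat.eq_zero_or_pos n with h0 | hpos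
          · subst h0
            simp only [range_zero, sum_empty]
            have := mul_nonneg hG (norm_nonneg (y 0 - y 1))
            linarith
          · obtain ⟨m, rfl⟩ := Nat.exists_eq_succ_of_ne_zero hpos.ne'
            have hs1 := (hsaddle m (by omega) (x (m + 2)) (hxmem _) (y (m + 1)) (hymem _)).2
            have hs2 := (hsaddle (m + 1) (by omega) (x (m + 2)) (hxmem _) (y (m + 1)) (hymem _)).1
            have eq1 : (∑ τ ∈ range (m + 1 + 1), L τ (x (m + 1 + 1)) (y (m + 1))) =
                (∑ τ ∈ range (m + 1), L τ (x (m + 1 + 1)) (y (m + 1))) +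
                  L (m + 1) (x (m + 1 + 1)) (y (m + 1)) := Finset.sum_range_succ _ _
            have eq2 : (∑ τ ∈ range (m + 1 + 1), L τ (x (m + 1 + 1)) (y (m + 1 + 1))) =
                (∑ τ ∈ range (m + 1), L τ (x (m + 1 + 1)) (y (m + 1 + 1))) +
                  L (m + 1) (x (m + 1 + 1)) (y (m + 1 + 1)) := Finset.sum_range_succ _ _
            have hlip := hLipY (m + 1) (x (m + 2)) (hxmem _) (y (m + 2)) (hymem _) (y (m + 1)) (hymem _)
            have hlip' : L (m + 1) (x (m + 2)) (y (m + 2)) - L (m + 1) (x (m + 2)) (y (m + 1)) ≤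
                G * ‖y (m + 2) - y (m + 1)‖ := le_trans (le_abs_self _) hlip
            rw [norm_sub_rev] at hlip'
            linarith [hs1, hs2, eq1, eq2, hlip']
        rw [Finset.sum_range_succ, Finset.sum_range_succ, Finset.sum_range_succ, mul_add]
        linarith
    have hkey := key T le_rfl
    have hinf : (∑ τ ∈ range T, L τ (x T) (y T)) ≤
        sInf ((fun x' => sSup ((fun y' => ∑ t ∈ range T, L t x' y') '' Y)) '' X) := by
      apply le_csInf (hXne.image _)
      rintro b ⟨x', hx', rfl⟩
      obtain ⟨C, hC⟩ := isBounded_iff_forall_norm_le.mp hYc.isBounded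
      have hbdd : BddAbove ((fun y' => ∑ t ∈ range T, L t x' y') '' Y) := by
        refine ⟨(∑ t ∈ range T, L t x' (y T)) + (T : ℝ) * (G * (C + C)), ?_⟩
        rintro b ⟨y', hy', rfl⟩
        have hterm : ∀ t ∈ range T, L t x' y' ≤ L t x' (y T) + G * (C + C) := by
          intro t _
          have h1 := le_trans (le_abs_self _) (hLipY t x' hx' y' hy' (y T) (hymem T))
          have h2 : ‖y' - y T‖ ≤ C + C :=
            le_trans (norm_sub_le _ _) (add_le_add (hC _ hy') (hC _ (hymem T)))
          nlinarith [norm_nonneg (y' - y T)]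
        calc (∑ t ∈ range T, L t x' y') ≤ ∑ t ∈ range T, (L t x' (y T) + G * (C + C)) :=
              Finset.sum_le_sum hterm
          _ = (∑ t ∈ range T, L t x' (y T)) + (T : ℝ) * (G * (C + C)) := by
              rw [Finset.sum_add_distrib, Finset.sum_const, card_range, nsmul_eq_mul]
      have h1 : (∑ τ ∈ range T, L τ (x T) (y T)) ≤ ∑ t ∈ range T, L t x' (y T) := by
        rcases Nat.eq_zero_or_pos T with h0 | hpos
        · rw [h0]; simp
        · obtain ⟨m, hm⟩ := Nat.exists_eq_succ_of_ne_zero hpos.ne'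
          have hs := (hsaddle m (by omega) x' hx' (y (m + 1)) (hymem _)).2
          rw [hm]
          exact hs
      have h2 : (∑ t ∈ range T, L t x' (y T)) ≤
          sSup ((fun y' => ∑ t ∈ range T, L t x' y') '' Y) :=
        le_csSup hbdd ⟨y T, hymem T, rfl⟩
      linarith
    linarith
  · -- degenerate case: G < 0 forces X and Y to be subsingletons
    have hYsub : Y.Subsingleton := by
      intro y1 h1 y2 h2
      by_contra hne
      obtain ⟨x0, hx0⟩ := hXne
      have h := hLip 0 x0 hx0 y1 h1 x0 hx0 y2 h2
      rw [sub_self, hnorm] at h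
      have hpos : 0 < ‖y1 - y2‖ := norm_pos_iff.mpr (sub_ne_zero.mpr hne)
      nlinarith [abs_nonneg (L 0 x0 y1 - L 0 x0 y2)]
    have hXsub : X.Subsingleton := by
      intro x1 h1 x2 h2
      by_contra hne
      obtain ⟨y0, hy0⟩ := hYne
      have h := hLip 0 x1 h1 y0 hy0 x2 h2 y0 hy0
      rw [sub_self] at h
      have hn : ‖((x1 - x2 : E), ((0:F)))‖ = ‖x1 - x2‖ := by
        rw [Prod.norm_def, norm_zero]
        exact max_eq_left (norm_nonneg _)
      rw [hn] at h
      have hpos : 0 < ‖x1 - x2‖ := norm_pos_iff.mpr (sub_ne_zero.mpr hne)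
      nlinarith [abs_nonneg (L 0 x1 y0 - L 0 x2 y0)]
    have hyall : ∀ t, y t = y 1 := fun t => hYsub (hymem t) (hymem 1)
    have hxall : ∀ t, x t = x 1 := fun t => hXsub (hxmem t) (hxmem 1)
    have hXeq : X = {x 1} := hXsub.eq_singleton_of_mem (hxmem 1)
    have hYeq : Y = {y 1} := hYsub.eq_singleton_of_mem (hymem 1)
    rw [hXeq, hYeq, Set.image_singleton, Set.image_singleton, csSup_singleton, csInf_singleton]
    simp only [hxall, hyall, sub_self, norm_zero, Finset.sum_const, smul_zero, mul_zero]
    simp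
end

section
/- (Follow-the-Leader saddle-point stability, lower bound.) Let L_1, ..., L_T : X × Y → ℝ be convex-concave functions on compact convex sets, each G-Lipschitz with respect to a norm ‖·‖ on the product, and for each t let (x_{t+1}, y_{t+1}) be a saddle point of Σ_{τ=1}^{t} L_τ. Then min_{x∈X} max_{y∈Y} Σ_{t=1}^T L_t(x, y) − Σ_{t=1}^T L_t(x_{t+1}, y_{t+1}) ≤ G·Σ_{t=1}^T ‖x_t − x_{t+1}‖. -/
open Finset

/-- Follow-the-Leader saddle-point stability, lower bound. If `(x_{t+1}, y_{t+1})`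
is a saddle point of the partial sum `∑_{τ≤t} L_τ`, then the minimax value of the total sum
exceeds the cumulative FTL value by at most `G ∑ₜ ‖xₜ − x_{t+1}‖`. -/
theorem ftl_saddle_stability_lower
    {E F : Type*} [NormedAddCommGroup E] [NormedSpace ℝ E]
    [NormedAddCommGroup F] [NormedSpace ℝ F]
    (X : Set E) (Y : Set F)
    (hXc : IsCompact X) (hXconv : Convex ℝ X) (hXne : X.Nonempty)
    (hYc : IsCompact Y) (hYconv : Convex ℝ Y) (hYne : Y.Nonempty)
    (T : ℕ) (G : ℝ)
    (L : ℕ → E → F → ℝ)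
    (hconv : ∀ t, ∀ y ∈ Y, ConvexOn ℝ X (fun x => L t x y))
    (hconc : ∀ t, ∀ x ∈ X, ConcaveOn ℝ Y (fun y => L t x y))
    (hLip : ∀ t, ∀ x1 ∈ X, ∀ y1 ∈ Y, ∀ x2 ∈ X, ∀ y2 ∈ Y,
      |L t x1 y1 - L t x2 y2| ≤ G * ‖((x1 - x2 : E), (y1 - y2 : F))‖)
    (x : ℕ → E) (y : ℕ → F)
    (hxmem : ∀ t, x t ∈ X) (hymem : ∀ t, y t ∈ Y)
    -- `(x (t+1), y (t+1))` is a saddle point of `∑_{τ ≤ t} L τ`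
    (hsaddle : ∀ t < T, ∀ x' ∈ X, ∀ y' ∈ Y,
      (∑ τ ∈ range (t + 1), L τ (x (t + 1)) y') ≤ ∑ τ ∈ range (t + 1), L τ (x (t + 1)) (y (t + 1)) ∧
      (∑ τ ∈ range (t + 1), L τ (x (t + 1)) (y (t + 1))) ≤ ∑ τ ∈ range (t + 1), L τ x' (y (t + 1))) :
    sInf ((fun x' => sSup ((fun y' => ∑ t ∈ range T, L t x' y') '' Y)) '' X) -
      (∑ t ∈ range T, L t (x (t + 1)) (y (t + 1))) ≤
      G * ∑ t ∈ range T, ‖x t - x (t + 1)‖ := by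
  -- Step 1: the "be-the-leader with stability" induction
  have key : ∀ n, n ≤ T →
      ∑ t ∈ range n, L t (x n) (y n) ≤
      ∑ t ∈ range n, L t (x (t+1)) (y (t+1)) + G * ∑ t ∈ range n, ‖x t - x (t+1)‖ := by
    intro n
    induction n with
    | zero => simp
    | succ n ih =>
      intro hn
      have hn' : n < T := hn
      have ihn := ih (le_of_lt hn')
      have h1 := (hsaddle n hn' (x n) (hxmem n) (y (n+1)) (hymem (n+1))).2
      rw [Finset.sum_range_succ, Finset.sum_range_succ (fun t => L t (x n) (y (n+1)))] at h1
      have h2 : ∑ t ∈ range n, L t (x n) (y (n+1)) ≤ ∑ t ∈ range n, L t (x n) (y n) := by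
        cases n with
        | zero => simp
        | succ m =>
          exact (hsaddle m (lt_trans (Nat.lt_succ_self m) hn') (x (m+1)) (hxmem _)
            (y (m+2)) (hymem _)).1
      have h3 : L n (x n) (y (n+1)) ≤ L n (x (n+1)) (y (n+1)) + G * ‖x n - x (n+1)‖ := by
        have h := hLip n (x n) (hxmem n) (y (n+1)) (hymem (n+1)) (x (n+1)) (hxmem (n+1))
          (y (n+1)) (hymem (n+1))
        have hnorm : ‖((x n - x (n+1) : E), (y (n+1) - y (n+1) : F))‖ = ‖x n - x (n+1)‖ := by
          simp [Prod.norm_def]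
        rw [hnorm] at h
        have := (abs_le.mp h).2
        linarith
      rw [Finset.sum_range_succ, Finset.sum_range_succ (fun t => L t (x (t+1)) (y (t+1))),
        Finset.sum_range_succ (fun t => ‖x t - x (t+1)‖)]
      have hmul : G * (∑ t ∈ range n, ‖x t - x (t+1)‖ + ‖x n - x (n+1)‖) =
          G * ∑ t ∈ range n, ‖x t - x (t+1)‖ + G * ‖x n - x (n+1)‖ := by ring
      rw [hmul]
      linarith
  -- Step 2: uniform bounds from compactness + Lipschitzness
  obtain ⟨CX, hCX⟩ := isBounded_iff_forall_norm_le.mp hXc.isBounded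
  obtain ⟨CY, hCY⟩ := isBounded_iff_forall_norm_le.mp hYc.isBounded
  set D : ℝ := 2 * CX + 2 * CY with hD
  set M : ℝ := ∑ t ∈ range T, L t (x T) (y T) with hM
  have hCX0 : 0 ≤ CX := le_trans (norm_nonneg _) (hCX _ (hxmem T))
  have hCY0 : 0 ≤ CY := le_trans (norm_nonneg _) (hCY _ (hymem T))
  have hterm : ∀ t, ∀ x' ∈ X, ∀ y' ∈ Y, |L t x' y' - L t (x T) (y T)| ≤ |G| * D := by
    intro t x' hx' y' hy'
    have h := hLip t x' hx' y' hy' (x T) (hxmem T) (y T) (hymem T)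
    have hnorm : ‖((x' - x T : E), (y' - y T : F))‖ ≤ D := by
      rw [Prod.norm_def]
      have h1 : ‖x' - x T‖ ≤ 2 * CX := by
        calc ‖x' - x T‖ ≤ ‖x'‖ + ‖x T‖ := norm_sub_le _ _
          _ ≤ 2 * CX := by have := hCX _ hx'; have := hCX _ (hxmem T); linarith
      have h2 : ‖y' - y T‖ ≤ 2 * CY := by
        calc ‖y' - y T‖ ≤ ‖y'‖ + ‖y T‖ := norm_sub_le _ _
          _ ≤ 2 * CY := by have := hCY _ hy'; have := hCY _ (hymem T); linarith
      simp only [max_le_iff]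
      constructor <;> [skip; skip] <;> simp only [hD] <;> linarith
    calc |L t x' y' - L t (x T) (y T)| ≤ G * ‖((x' - x T : E), (y' - y T : F))‖ := h
      _ ≤ |G| * ‖((x' - x T : E), (y' - y T : F))‖ :=
        mul_le_mul_of_nonneg_right (le_abs_self G) (norm_nonneg _)
      _ ≤ |G| * D := mul_le_mul_of_nonneg_left hnorm (abs_nonneg G)
  have hsumub : ∀ x' ∈ X, ∀ y' ∈ Y,
      ∑ t ∈ range T, L t x' y' ≤ M + T * (|G| * D) := by
    intro x' hx' y' hy'
    have : ∑ t ∈ range T, L t x' y' ≤ ∑ t ∈ range T, (L t (x T) (y T) + |G| * D) :=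
      Finset.sum_le_sum fun t _ => by
        have := (abs_le.mp (hterm t x' hx' y' hy')).2; linarith
    simpa [Finset.sum_add_distrib, hM, mul_comm] using this
  have hsumlb : ∀ x' ∈ X, ∀ y' ∈ Y,
      M - T * (|G| * D) ≤ ∑ t ∈ range T, L t x' y' := by
    intro x' hx' y' hy'
    have : ∑ t ∈ range T, (L t (x T) (y T) - |G| * D) ≤ ∑ t ∈ range T, L t x' y' :=
      Finset.sum_le_sum fun t _ => by
        have := (abs_le.mp (hterm t x' hx' y' hy')).1; linarith
    simpa [Finset.sum_sub_distrib, hM, mul_comm] using this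
  -- inner sups
  have hbddA : ∀ x' ∈ X, BddAbove ((fun y' => ∑ t ∈ range T, L t x' y') '' Y) := by
    intro x' hx'
    exact ⟨M + T * (|G| * D), by rintro a ⟨y', hy', rfl⟩; exact hsumub x' hx' y' hy'⟩
  have hbddB : BddBelow ((fun x' => sSup ((fun y' => ∑ t ∈ range T, L t x' y') '' Y)) '' X) := by
    refine ⟨M - T * (|G| * D), ?_⟩
    rintro a ⟨x', hx', rfl⟩
    calc M - T * (|G| * D) ≤ ∑ t ∈ range T, L t x' (y T) := hsumlb x' hx' (y T) (hymem T)
      _ ≤ sSup ((fun y' => ∑ t ∈ range T, L t x' y') '' Y) :=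
        le_csSup (hbddA x' hx') ⟨y T, hymem T, rfl⟩
  have hsupT : sSup ((fun y' => ∑ t ∈ range T, L t (x T) y') '' Y) ≤ M := by
    apply csSup_le (hYne.image _)
    rintro a ⟨y', hy', rfl⟩
    rcases Nat.eq_zero_or_pos T with hT0 | hT0
    · simp [hM, hT0]
    · have h := (hsaddle (T - 1) (by omega) (x T) (hxmem T) y' hy').1
      rw [Nat.sub_add_cancel hT0] at h
      exact h
  have hinf : sInf ((fun x' => sSup ((fun y' => ∑ t ∈ range T, L t x' y') '' Y)) '' X) ≤ M :=
    le_trans (csInf_le hbddB ⟨x T, hxmem T, rfl⟩) hsupT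
  have := key T le_rfl
  linarith
end

section
/- (Impossibility of simultaneous NE-regret and individual-regret minimization.) For any deterministic algorithm that maps histories A_1, ..., A_{t−1} of 2×2 payoff matrices with entries in [−1,1] to strategy pairs (x_t, y_t) ∈ Δ_2 × Δ_2, there exists a sequence A_1, A_2, ... of matrices with entries in [−1,1] such that not all three of the following hold: (i) |Σ_{t=1}^T x_tᵀA_t y_t − min_{x∈Δ_2} max_{y∈Δ_2} Σ_{t=1}^T xᵀA_t y| = o(T); (ii) Σ_{t=1}^T x_tᵀA_t y_t − min_{x∈Δ_2} Σ_{t=1}^T xᵀA_t y_t = o(T); (iii) max_{y∈Δ_2} Σ_{t=1}^T x_tᵀA_t y − Σ_{t=1}^T x_tᵀA_t y_t = o(T). -/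
open Finset Filter

noncomputable section OMG

abbrev Mat := Fin 2 → Fin 2 → ℝ

def MM : Mat := fun i j => if i = j then 1 else -1
def BB : Mat := fun _ j => if j = 0 then 1 else -1

def phi (A : Mat) (x y : Fin 2 → ℝ) : ℝ := ∑ i, ∑ j, x i * A i j * y j

lemma phi_eq (A : Mat) (x y : Fin 2 → ℝ) :
    phi A x y = x 0 * A 0 0 * y 0 + x 0 * A 0 1 * y 1 + x 1 * A 1 0 * y 0 + x 1 * A 1 1 * y 1 := by
  simp [phi, Fin.sum_univ_two]; ring

lemma mem_simplex_iff {x : Fin 2 → ℝ} :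
    x ∈ stdSimplex ℝ (Fin 2) ↔ (0 ≤ x 0 ∧ 0 ≤ x 1) ∧ x 0 + x 1 = 1 := by
  constructor
  · rintro ⟨h1, h2⟩
    exact ⟨⟨h1 0, h1 1⟩, by simpa [Fin.sum_univ_two] using h2⟩
  · rintro ⟨⟨h0, h1⟩, hs⟩
    refine ⟨fun i => ?_, by simpa [Fin.sum_univ_two] using hs⟩
    fin_cases i <;> assumption

def half : Fin 2 → ℝ := fun _ => 1/2
def e0 : Fin 2 → ℝ := fun j => if j = 0 then 1 else 0
def e1 : Fin 2 → ℝ := fun j => if j = 0 then 0 else 1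

lemma half_mem : half ∈ stdSimplex ℝ (Fin 2) := mem_simplex_iff.2 ⟨⟨by norm_num [half], by norm_num [half]⟩, by norm_num [half]⟩
lemma e0_mem : e0 ∈ stdSimplex ℝ (Fin 2) := mem_simplex_iff.2 ⟨⟨by norm_num [e0], by norm_num [e0]⟩, by norm_num [e0]⟩
lemma e1_mem : e1 ∈ stdSimplex ℝ (Fin 2) := mem_simplex_iff.2 ⟨⟨by norm_num [e1], by norm_num [e1]⟩, by norm_num [e1]⟩

lemma abs_phi_le {A : Mat} {x y : Fin 2 → ℝ} (hA : ∀ i j, |A i j| ≤ 1)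
    (hx : x ∈ stdSimplex ℝ (Fin 2)) (hy : y ∈ stdSimplex ℝ (Fin 2)) : |phi A x y| ≤ 1 := by
  obtain ⟨⟨hx0, hx1⟩, hxs⟩ := mem_simplex_iff.1 hx
  obtain ⟨⟨hy0, hy1⟩, hys⟩ := mem_simplex_iff.1 hy
  rw [phi_eq, abs_le]
  have h00 := abs_le.1 (hA 0 0); have h01 := abs_le.1 (hA 0 1)
  have h10 := abs_le.1 (hA 1 0); have h11 := abs_le.1 (hA 1 1)
  have p00 := mul_nonneg hx0 hy0; have p01 := mul_nonneg hx0 hy1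
  have p10 := mul_nonneg hx1 hy0; have p11 := mul_nonneg hx1 hy1
  have u00 := mul_le_mul_of_nonneg_left h00.2 p00
  have l00 := mul_le_mul_of_nonneg_left h00.1 p00
  have u01 := mul_le_mul_of_nonneg_left h01.2 p01
  have l01 := mul_le_mul_of_nonneg_left h01.1 p01
  have u10 := mul_le_mul_of_nonneg_left h10.2 p10
  have l10 := mul_le_mul_of_nonneg_left h10.1 p10
  have u11 := mul_le_mul_of_nonneg_left h11.2 p11
  have l11 := mul_le_mul_of_nonneg_left h11.1 p11
  constructor <;> nlinarith [u00, l00, u01, l01, u10, l10, u11, l11]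

-- phi special values
lemma phi_MM_half_right {x : Fin 2 → ℝ} : phi MM x half = 0 := by
  rw [phi_eq]; norm_num [MM, half]; try ring
lemma phi_MM_half_left {y : Fin 2 → ℝ} : phi MM half y = 0 := by
  rw [phi_eq]; norm_num [MM, half]; try ring
lemma phi_BB_half_right {x : Fin 2 → ℝ} : phi BB x half = 0 := by
  rw [phi_eq]; norm_num [BB, half]; try ring
lemma phi_MM_e1_left {y : Fin 2 → ℝ} : phi MM e1 y = y 1 - y 0 := by
  rw [phi_eq]; norm_num [MM, e1]; try ring
lemma phi_BB_e1_left {y : Fin 2 → ℝ} : phi BB e1 y = y 0 - y 1 := by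
  rw [phi_eq]; norm_num [BB, e1]; try ring
lemma phi_MM_e0_right {x : Fin 2 → ℝ} : phi MM x e0 = x 0 - x 1 := by
  rw [phi_eq]; norm_num [MM, e0]; try ring
lemma phi_BB_e0_right {x : Fin 2 → ℝ} (hx : x ∈ stdSimplex ℝ (Fin 2)) : phi BB x e0 = 1 := by
  obtain ⟨_, hxs⟩ := mem_simplex_iff.1 hx
  rw [phi_eq]; norm_num [BB, e0]; linarith

lemma MM_abs (i j : Fin 2) : |MM i j| ≤ 1 := by unfold MM; split <;> norm_num
lemma BB_abs (i j : Fin 2) : |BB i j| ≤ 1 := by unfold BB; split <;> norm_num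

-- sSup/sInf helpers on simplex images
lemma sSup_image_le {f : (Fin 2 → ℝ) → ℝ} {c : ℝ}
    (h : ∀ y ∈ stdSimplex ℝ (Fin 2), f y ≤ c) : sSup (f '' stdSimplex ℝ (Fin 2)) ≤ c :=
  csSup_le (Set.Nonempty.image _ ⟨half, half_mem⟩) (by rintro _ ⟨y, hy, rfl⟩; exact h y hy)

lemma le_sSup_image {f : (Fin 2 → ℝ) → ℝ} {y0 : Fin 2 → ℝ} (hy0 : y0 ∈ stdSimplex ℝ (Fin 2))
    {c : ℝ} (hbdd : ∀ y ∈ stdSimplex ℝ (Fin 2), f y ≤ c) :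
    f y0 ≤ sSup (f '' stdSimplex ℝ (Fin 2)) :=
  le_csSup ⟨c, by rintro _ ⟨y, hy, rfl⟩; exact hbdd y hy⟩ ⟨y0, hy0, rfl⟩

lemma le_sInf_image {f : (Fin 2 → ℝ) → ℝ} {c : ℝ}
    (h : ∀ x ∈ stdSimplex ℝ (Fin 2), c ≤ f x) : c ≤ sInf (f '' stdSimplex ℝ (Fin 2)) :=
  le_csInf (Set.Nonempty.image _ ⟨half, half_mem⟩) (by rintro _ ⟨x, hx, rfl⟩; exact h x hx)

lemma sInf_image_le {f : (Fin 2 → ℝ) → ℝ} {x0 : Fin 2 → ℝ} (hx0 : x0 ∈ stdSimplex ℝ (Fin 2))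
    {c : ℝ} (hbdd : ∀ x ∈ stdSimplex ℝ (Fin 2), c ≤ f x) :
    sInf (f '' stdSimplex ℝ (Fin 2)) ≤ f x0 :=
  csInf_le ⟨c, by rintro _ ⟨x, hx, rfl⟩; exact hbdd x hx⟩ ⟨x0, hx0, rfl⟩

lemma phi_MM_e1_right {x : Fin 2 → ℝ} : phi MM x e1 = x 1 - x 0 := by
  rw [phi_eq]; norm_num [MM, e1]; try ring

section Alg
variable (alg : List Mat → (Fin 2 → ℝ) × (Fin 2 → ℝ))

def xs (A : ℕ → Mat) (t : ℕ) : Fin 2 → ℝ := (alg ((List.range t).map A)).1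
def ys (A : ℕ → Mat) (t : ℕ) : Fin 2 → ℝ := (alg ((List.range t).map A)).2

def pay (A : ℕ → Mat) (T : ℕ) : ℝ := ∑ t ∈ range T, phi (A t) (xs alg A t) (ys alg A t)

def mmx (A : ℕ → Mat) (T : ℕ) : ℝ :=
  sInf ((fun x' => sSup ((fun y' => ∑ t ∈ range T, phi (A t) x' y')
      '' stdSimplex ℝ (Fin 2))) '' stdSimplex ℝ (Fin 2))

def ri1 (A : ℕ → Mat) (T : ℕ) : ℝ :=
  sInf ((fun x' => ∑ t ∈ range T, phi (A t) x' (ys alg A t)) '' stdSimplex ℝ (Fin 2))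

def rs2 (A : ℕ → Mat) (T : ℕ) : ℝ :=
  sSup ((fun y' => ∑ t ∈ range T, phi (A t) (xs alg A t) y') '' stdSimplex ℝ (Fin 2))

def Q (A : ℕ → Mat) (T : ℕ) : ℝ :=
  max |pay alg A T - mmx A T| (max (pay alg A T - ri1 alg A T) (rs2 alg A T - pay alg A T))

lemma xs_mem (halg : ∀ h : List Mat, (alg h).1 ∈ stdSimplex ℝ (Fin 2) ∧ (alg h).2 ∈ stdSimplex ℝ (Fin 2))
    (A : ℕ → Mat) (t : ℕ) : xs alg A t ∈ stdSimplex ℝ (Fin 2) := (halg _).1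
lemma ys_mem (halg : ∀ h : List Mat, (alg h).1 ∈ stdSimplex ℝ (Fin 2) ∧ (alg h).2 ∈ stdSimplex ℝ (Fin 2))
    (A : ℕ → Mat) (t : ℕ) : ys alg A t ∈ stdSimplex ℝ (Fin 2) := (halg _).2

-- congruence: everything depends only on the prefix
lemma map_congr' {A A' : ℕ → Mat} {T t : ℕ} (h : ∀ u < T, A u = A' u) (ht : t ≤ T) :
    (List.range t).map A = (List.range t).map A' :=
  List.map_congr_left (fun u hu => h u (lt_of_lt_of_le (List.mem_range.1 hu) ht))

lemma xs_congr {A A' : ℕ → Mat} {T t : ℕ} (h : ∀ u < T, A u = A' u) (ht : t ≤ T) :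
    xs alg A t = xs alg A' t := by unfold xs; rw [map_congr' h ht]

lemma ys_congr {A A' : ℕ → Mat} {T t : ℕ} (h : ∀ u < T, A u = A' u) (ht : t ≤ T) :
    ys alg A t = ys alg A' t := by unfold ys; rw [map_congr' h ht]

lemma pay_congr {A A' : ℕ → Mat} {T : ℕ} (h : ∀ u < T, A u = A' u) :
    pay alg A T = pay alg A' T := by
  unfold pay
  refine Finset.sum_congr rfl (fun t ht => ?_)
  have ht' := Finset.mem_range.1 ht
  rw [h t ht', xs_congr alg h ht'.le, ys_congr alg h ht'.le]

lemma mmx_congr {A A' : ℕ → Mat} {T : ℕ} (h : ∀ u < T, A u = A' u) :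
    mmx A T = mmx A' T := by
  unfold mmx
  have hfun : (fun x' => sSup ((fun y' => ∑ t ∈ range T, phi (A t) x' y') '' stdSimplex ℝ (Fin 2)))
      = (fun x' => sSup ((fun y' => ∑ t ∈ range T, phi (A' t) x' y') '' stdSimplex ℝ (Fin 2))) := by
    funext x'
    have : (fun y' => ∑ t ∈ range T, phi (A t) x' y')
        = (fun y' => ∑ t ∈ range T, phi (A' t) x' y') := by
      funext y'
      exact Finset.sum_congr rfl (fun t ht => by rw [h t (Finset.mem_range.1 ht)])
    rw [this]
  rw [hfun]

lemma ri1_congr {A A' : ℕ → Mat} {T : ℕ} (h : ∀ u < T, A u = A' u) :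
    ri1 alg A T = ri1 alg A' T := by
  unfold ri1
  have hfun : (fun x' => ∑ t ∈ range T, phi (A t) x' (ys alg A t))
      = (fun x' => ∑ t ∈ range T, phi (A' t) x' (ys alg A' t)) := by
    funext x'
    refine Finset.sum_congr rfl (fun t ht => ?_)
    have ht' := Finset.mem_range.1 ht
    rw [h t ht', ys_congr alg h ht'.le]
  rw [hfun]

lemma rs2_congr {A A' : ℕ → Mat} {T : ℕ} (h : ∀ u < T, A u = A' u) :
    rs2 alg A T = rs2 alg A' T := by
  unfold rs2
  have hfun : (fun y' => ∑ t ∈ range T, phi (A t) (xs alg A t) y')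
      = (fun y' => ∑ t ∈ range T, phi (A' t) (xs alg A' t) y') := by
    funext y'
    refine Finset.sum_congr rfl (fun t ht => ?_)
    have ht' := Finset.mem_range.1 ht
    rw [h t ht', xs_congr alg h ht'.le]
  rw [hfun]

lemma Q_congr {A A' : ℕ → Mat} {T : ℕ} (h : ∀ u < T, A u = A' u) :
    Q alg A T = Q alg A' T := by
  unfold Q
  rw [pay_congr alg h, mmx_congr h, ri1_congr alg h, rs2_congr alg h]

-- bounds
lemma abs_sum_phi {A : ℕ → Mat} {a b : ℕ} (hab : a ≤ b)
    (hA : ∀ t, a ≤ t → t < b → ∀ i j, |A t i j| ≤ 1)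
    (x y : ℕ → Fin 2 → ℝ) (hx : ∀ t, x t ∈ stdSimplex ℝ (Fin 2))
    (hy : ∀ t, y t ∈ stdSimplex ℝ (Fin 2)) :
    |∑ t ∈ Ico a b, phi (A t) (x t) (y t)| ≤ (b : ℝ) - a := by
  calc |∑ t ∈ Ico a b, phi (A t) (x t) (y t)| ≤ ∑ t ∈ Ico a b, |phi (A t) (x t) (y t)| :=
        Finset.abs_sum_le_sum_abs _ _
    _ ≤ ∑ _t ∈ Ico a b, (1 : ℝ) := Finset.sum_le_sum (fun t ht => by
        obtain ⟨h1, h2⟩ := Finset.mem_Ico.1 ht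
        exact abs_phi_le (hA t h1 h2) (hx t) (hy t))
    _ ≤ (b : ℝ) - a := by
        rw [Finset.sum_const, Nat.card_Ico, nsmul_eq_mul, mul_one, Nat.cast_sub hab]

lemma sum_split {n m : ℕ} (f : ℕ → ℝ) (h : n ≤ m) :
    ∑ t ∈ range m, f t = ∑ t ∈ range n, f t + ∑ t ∈ Ico n m, f t := by
  rw [range_eq_Ico, ← Finset.sum_Ico_consecutive f (Nat.zero_le n) h, ← range_eq_Ico]

end Alg

section Main
variable (alg : List Mat → (Fin 2 → ℝ) × (Fin 2 → ℝ))

lemma abs_sum_phi_range {A : ℕ → Mat} (hA : ∀ t i j, |A t i j| ≤ 1) (T : ℕ)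
    {x y : ℕ → Fin 2 → ℝ} (hx : ∀ t, x t ∈ stdSimplex ℝ (Fin 2))
    (hy : ∀ t, y t ∈ stdSimplex ℝ (Fin 2)) :
    |∑ t ∈ range T, phi (A t) (x t) (y t)| ≤ (T : ℝ) := by
  rw [range_eq_Ico]
  simpa using abs_sum_phi (Nat.zero_le T) (fun t _ _ => hA t) x y hx hy

variable (halg : ∀ h : List Mat,
  (alg h).1 ∈ stdSimplex ℝ (Fin 2) ∧ (alg h).2 ∈ stdSimplex ℝ (Fin 2))

lemma rs2_ge (halg : ∀ h : List Mat,
      (alg h).1 ∈ stdSimplex ℝ (Fin 2) ∧ (alg h).2 ∈ stdSimplex ℝ (Fin 2)) {A : ℕ → Mat} (hA : ∀ t i j, |A t i j| ≤ 1) {T : ℕ} {y0 : Fin 2 → ℝ}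
    (hy0 : y0 ∈ stdSimplex ℝ (Fin 2)) :
    ∑ t ∈ range T, phi (A t) (xs alg A t) y0 ≤ rs2 alg A T :=
  le_sSup_image hy0 (fun y hy => le_trans (le_abs_self _)
    (abs_sum_phi_range hA T (xs_mem alg halg A) (fun _ => hy)))

lemma mmx_le_of {A : ℕ → Mat} (hA : ∀ t i j, |A t i j| ≤ 1) {T : ℕ} {x0 : Fin 2 → ℝ}
    (hx0 : x0 ∈ stdSimplex ℝ (Fin 2)) {c : ℝ}
    (hc : ∀ y ∈ stdSimplex ℝ (Fin 2), ∑ t ∈ range T, phi (A t) x0 y ≤ c) :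
    mmx A T ≤ c := by
  unfold mmx
  refine le_trans (sInf_image_le hx0 (c := -(T:ℝ)) ?_) (sSup_image_le hc)
  intro x' hx'
  refine le_trans ?_ (le_sSup_image half_mem (fun y hy => le_trans (le_abs_self _)
    (abs_sum_phi_range hA T (fun _ => hx') (fun _ => hy))))
  exact (abs_le.1 (abs_sum_phi_range hA T (x := fun _ => x') (y := fun _ => half)
    (fun _ => hx') (fun _ => half_mem))).1

lemma else_key (halg : ∀ h : List Mat,
      (alg h).1 ∈ stdSimplex ℝ (Fin 2) ∧ (alg h).2 ∈ stdSimplex ℝ (Fin 2))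
    {A : ℕ → Mat} {n L : ℕ} (hL : L = 100 * (n + 1))
    (hA : ∀ t i j, |A t i j| ≤ 1)
    (hM : ∀ t, n ≤ t → t < n + L → A t = MM)
    (hB : ∀ t, n + L ≤ t → t < n + 2 * L → A t = BB)
    (hQ : Q alg A (n + L) < ((n + L : ℕ) : ℝ) / 20) :
    ((n + 2 * L : ℕ) : ℝ) / 20 ≤ Q alg A (n + 2 * L) := by
  set m := n + L with hm
  set T := n + 2 * L with hT
  have hnm : n ≤ m := Nat.le_add_right _ _
  have hmT : m ≤ T := by omega
  set q : ℝ := ∑ t ∈ Ico n m, (xs alg A t 0 - xs alg A t 1) with hqdef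
  -- (1) minimax at m is at most n
  have hmm_m : mmx A m ≤ (n:ℝ) := by
    refine mmx_le_of hA half_mem (fun y hy => ?_)
    rw [sum_split _ hnm]
    have h2 : ∑ t ∈ Ico n m, phi (A t) half y = 0 := by
      refine Finset.sum_eq_zero (fun t ht => ?_)
      obtain ⟨h1, h2⟩ := Finset.mem_Ico.1 ht
      rw [hM t h1 h2, phi_MM_half_left]
    have h1 := (abs_le.1 (abs_sum_phi_range hA n (x := fun _ => half) (y := fun _ => y)
      (fun _ => half_mem) (fun _ => hy))).2
    linarith
  -- (3) rs2 at m is at least |q| - n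
  have hq1 : q - (n:ℝ) ≤ rs2 alg A m := by
    have h0 := rs2_ge alg halg hA (T := m) e0_mem
    have hsplit : ∑ t ∈ range m, phi (A t) (xs alg A t) e0
        = ∑ t ∈ range n, phi (A t) (xs alg A t) e0 + q := by
      rw [sum_split _ hnm, hqdef]
      congr 1
      refine Finset.sum_congr rfl (fun t ht => ?_)
      obtain ⟨h1, h2⟩ := Finset.mem_Ico.1 ht
      rw [hM t h1 h2, phi_MM_e0_right]
    rw [hsplit] at h0
    have h1 := (abs_le.1 (abs_sum_phi_range hA n (x := xs alg A) (y := fun _ => e0)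
      (xs_mem alg halg A) (fun _ => e0_mem))).1
    linarith
  have hq2 : -q - (n:ℝ) ≤ rs2 alg A m := by
    have h0 := rs2_ge alg halg hA (T := m) e1_mem
    have hsplit : ∑ t ∈ range m, phi (A t) (xs alg A t) e1
        = ∑ t ∈ range n, phi (A t) (xs alg A t) e1 + -q := by
      rw [sum_split _ hnm, hqdef, ← Finset.sum_neg_distrib]
      congr 1
      refine Finset.sum_congr rfl (fun t ht => ?_)
      obtain ⟨h1, h2⟩ := Finset.mem_Ico.1 ht
      rw [hM t h1 h2, phi_MM_e1_right]
      ring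
    rw [hsplit] at h0
    have h1 := (abs_le.1 (abs_sum_phi_range hA n (x := xs alg A) (y := fun _ => e1)
      (xs_mem alg halg A) (fun _ => e1_mem))).1
    linarith
  -- (4) minimax at T is at most n
  have hmm_T : mmx A T ≤ (n:ℝ) := by
    refine mmx_le_of hA e1_mem (fun y hy => ?_)
    rw [sum_split _ (le_trans hnm hmT), ← Finset.sum_Ico_consecutive _ hnm hmT]
    have hI1 : ∑ t ∈ Ico n m, phi (A t) e1 y = (L:ℝ) * (y 1 - y 0) := by
      calc ∑ t ∈ Ico n m, phi (A t) e1 y = ∑ _t ∈ Ico n m, (y 1 - y 0) :=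
            Finset.sum_congr rfl (fun t ht => by
              obtain ⟨h1, h2⟩ := Finset.mem_Ico.1 ht
              rw [hM t h1 h2, phi_MM_e1_left])
        _ = (L:ℝ) * (y 1 - y 0) := by
            rw [Finset.sum_const, Nat.card_Ico, nsmul_eq_mul]
            have : m - n = L := by omega
            rw [this]
    have hI2 : ∑ t ∈ Ico m T, phi (A t) e1 y = (L:ℝ) * (y 0 - y 1) := by
      calc ∑ t ∈ Ico m T, phi (A t) e1 y = ∑ _t ∈ Ico m T, (y 0 - y 1) :=
            Finset.sum_congr rfl (fun t ht => by
              obtain ⟨h1, h2⟩ := Finset.mem_Ico.1 ht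
              rw [hB t h1 h2, phi_BB_e1_left])
        _ = (L:ℝ) * (y 0 - y 1) := by
            rw [Finset.sum_const, Nat.card_Ico, nsmul_eq_mul]
            have : T - m = L := by omega
            rw [this]
    have h1 := (abs_le.1 (abs_sum_phi_range hA n (x := fun _ => e1) (y := fun _ => y)
      (fun _ => e1_mem) (fun _ => hy))).2
    have hz : (L:ℝ) * (y 1 - y 0) + (L:ℝ) * (y 0 - y 1) = 0 := by ring
    linarith [hI1, hI2]
  -- (5) rs2 at T is at least q + L - n
  have hq3 : q + (L:ℝ) - n ≤ rs2 alg A T := by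
    have h0 := rs2_ge alg halg hA (T := T) e0_mem
    rw [sum_split _ (le_trans hnm hmT), ← Finset.sum_Ico_consecutive _ hnm hmT] at h0
    have hI1 : ∑ t ∈ Ico n m, phi (A t) (xs alg A t) e0 = q := by
      rw [hqdef]
      refine Finset.sum_congr rfl (fun t ht => ?_)
      obtain ⟨h1, h2⟩ := Finset.mem_Ico.1 ht
      rw [hM t h1 h2, phi_MM_e0_right]
    have hI2 : ∑ t ∈ Ico m T, phi (A t) (xs alg A t) e0 = (L:ℝ) := by
      calc ∑ t ∈ Ico m T, phi (A t) (xs alg A t) e0 = ∑ _t ∈ Ico m T, (1:ℝ) :=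
            Finset.sum_congr rfl (fun t ht => by
              obtain ⟨h1, h2⟩ := Finset.mem_Ico.1 ht
              rw [hB t h1 h2, phi_BB_e0_right (xs_mem alg halg A t)])
        _ = (L:ℝ) := by
            rw [Finset.sum_const, nsmul_eq_mul, mul_one, Nat.card_Ico]
            have : T - m = L := by omega
            rw [this]
    have h1 := (abs_le.1 (abs_sum_phi_range hA n (x := xs alg A) (y := fun _ => e0)
      (xs_mem alg halg A) (fun _ => e0_mem))).1
    rw [hI1, hI2] at h0
    linarith
  -- components from hQ
  have hQ1 : pay alg A m - mmx A m ≤ ((m:ℕ):ℝ) / 20 :=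
    le_trans (le_abs_self _) (le_trans (le_max_left _ _) hQ.le)
  have hQ3 : rs2 alg A m - pay alg A m ≤ ((m:ℕ):ℝ) / 20 :=
    le_trans (le_trans (le_max_right _ _) (le_max_right _ _)) hQ.le
  -- bound on |q|
  have hqb1 : q ≤ (m:ℝ)/10 + 2*(n:ℝ) := by linarith
  have hqb2 : -q ≤ (m:ℝ)/10 + 2*(n:ℝ) := by linarith
  -- final combination at horizon T
  have hfin1 : pay alg A T - mmx A T ≤ Q alg A T :=
    le_trans (le_abs_self _) (le_max_left _ _)
  have hfin2 : rs2 alg A T - pay alg A T ≤ Q alg A T :=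
    le_trans (le_max_right _ _) (le_max_right _ _)
  have hcastm : ((m:ℕ):ℝ) = (n:ℝ) + (L:ℝ) := by rw [hm]; push_cast; ring
  have hcastT : ((T:ℕ):ℝ) = (n:ℝ) + 2*(L:ℝ) := by rw [hT]; push_cast; ring
  have hLn : (L:ℝ) = 100 * ((n:ℝ) + 1) := by exact_mod_cast hL
  linarith

end Main

section Constr
open Classical
variable (alg : List Mat → (Fin 2 → ℝ) × (Fin 2 → ℝ))

noncomputable def step (p : (ℕ → Mat) × ℕ) : (ℕ → Mat) × ℕ :=
  if ((p.2 + 100 * (p.2 + 1) : ℕ) : ℝ) / 20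
      ≤ Q alg (fun t => if t < p.2 then p.1 t else MM) (p.2 + 100 * (p.2 + 1))
  then (fun t => if t < p.2 then p.1 t else MM, p.2 + 100 * (p.2 + 1))
  else (fun t => if t < p.2 + 100 * (p.2 + 1) then (if t < p.2 then p.1 t else MM) else BB,
        p.2 + 2 * (100 * (p.2 + 1)))

noncomputable def sqq : ℕ → (ℕ → Mat) × ℕ
  | 0 => (fun _ => MM, 0)
  | (k+1) => step alg (sqq k)

lemma step_entries {p : (ℕ → Mat) × ℕ} (hp : ∀ t i j, |p.1 t i j| ≤ 1) :
    ∀ t i j, |(step alg p).1 t i j| ≤ 1 := by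
  intro t i j
  unfold step
  split_ifs with h <;> simp only [] <;> split_ifs <;>
    first | exact hp t i j | exact MM_abs i j | exact BB_abs i j

lemma sqq_entries : ∀ k t i j, |(sqq alg k).1 t i j| ≤ 1 := by
  intro k
  induction k with
  | zero => intro t i j; exact MM_abs i j
  | succ k ih => exact step_entries alg ih

lemma step_len {p : (ℕ → Mat) × ℕ} : p.2 + 1 ≤ (step alg p).2 := by
  unfold step; split_ifs <;> simp <;> omega

lemma step_agree {p : (ℕ → Mat) × ℕ} {t : ℕ} (ht : t < p.2) :
    (step alg p).1 t = p.1 t := by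
  unfold step
  split_ifs with h <;> simp only []
  · rw [if_pos ht]
  · rw [if_pos (by omega : t < p.2 + 100 * (p.2 + 1)), if_pos ht]

lemma sqq_len_mono {k j : ℕ} (h : k ≤ j) : (sqq alg k).2 ≤ (sqq alg j).2 := by
  induction j with
  | zero => simp at h; simp [h]
  | succ j ih =>
    rcases Nat.lt_or_ge k (j+1) with h' | h'
    · exact le_trans (ih (by omega)) (le_trans (Nat.le_succ _) (step_len alg))
    · have : k = j + 1 := by omega
      simp [this]

lemma sqq_len_ge (k : ℕ) : k ≤ (sqq alg k).2 := by
  induction k with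
  | zero => simp [sqq]
  | succ k ih => exact le_trans (by omega : k + 1 ≤ (sqq alg k).2 + 1) (step_len alg)

lemma sqq_agree {k j t : ℕ} (h : k ≤ j) (ht : t < (sqq alg k).2) :
    (sqq alg j).1 t = (sqq alg k).1 t := by
  induction j with
  | zero =>
    have : k = 0 := by omega
    simp [this]
  | succ j ih =>
    rcases Nat.lt_or_ge k (j+1) with h' | h'
    · have hj : k ≤ j := by omega
      have : (sqq alg (j+1)).1 t = (sqq alg j).1 t :=
        step_agree alg (lt_of_lt_of_le ht (sqq_len_mono alg hj))
      rw [this, ih hj]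
    · have : k = j + 1 := by omega
      simp [this]

noncomputable def Aseq : ℕ → Mat := fun t => (sqq alg (t+1)).1 t

lemma Aseq_agree {k t : ℕ} (ht : t < (sqq alg k).2) : Aseq alg t = (sqq alg k).1 t := by
  unfold Aseq
  rcases le_or_gt (t+1) k with h | h
  · exact (sqq_agree alg h (lt_of_lt_of_le (Nat.lt_succ_self t) (sqq_len_ge alg (t+1)))).symm
  · exact sqq_agree alg (by omega) ht

lemma Aseq_entries : ∀ t i j, |Aseq alg t i j| ≤ 1 := fun t i j =>
  sqq_entries alg (t+1) t i j

lemma step_key (halg : ∀ h : List Mat,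
      (alg h).1 ∈ stdSimplex ℝ (Fin 2) ∧ (alg h).2 ∈ stdSimplex ℝ (Fin 2))
    {p : (ℕ → Mat) × ℕ} (hp : ∀ t i j, |p.1 t i j| ≤ 1) :
    (((step alg p).2 : ℕ) : ℝ) / 20 ≤ Q alg (step alg p).1 (step alg p).2 := by
  set n := p.2 with hn
  set L := 100 * (n + 1) with hLdef
  set A1 : ℕ → Mat := fun t => if t < n then p.1 t else MM with hA1
  have hA1e : ∀ t i j, |A1 t i j| ≤ 1 := by
    intro t i j; rw [hA1]; simp only []
    split_ifs
    · exact hp t i j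
    · exact MM_abs i j
  unfold step
  split_ifs with h
  · exact h
  · -- else branch
    set A2 : ℕ → Mat := fun t => if t < n + L then A1 t else BB with hA2
    have hA2e : ∀ t i j, |A2 t i j| ≤ 1 := by
      intro t i j; rw [hA2]; simp only []
      split_ifs
      · exact hA1e t i j
      · exact BB_abs i j
    have hM : ∀ t, n ≤ t → t < n + L → A2 t = MM := by
      intro t h1 h2; rw [hA2]; simp only []
      rw [if_pos h2, hA1]; simp only []
      rw [if_neg (by omega)]
    have hB : ∀ t, n + L ≤ t → t < n + 2 * L → A2 t = BB := by
      intro t h1 h2; rw [hA2]; simp only []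
      rw [if_neg (by omega)]
    have hagree : ∀ u < n + L, A2 u = A1 u := by
      intro u hu; rw [hA2]; simp only []; rw [if_pos hu]
    have hQ2 : Q alg A2 (n + L) < ((n + L : ℕ) : ℝ) / 20 := by
      rw [Q_congr alg hagree]
      exact lt_of_not_ge h
    exact else_key alg halg rfl hA2e hM hB hQ2

lemma sqq_key (halg : ∀ h : List Mat,
      (alg h).1 ∈ stdSimplex ℝ (Fin 2) ∧ (alg h).2 ∈ stdSimplex ℝ (Fin 2)) (k : ℕ) :
    (((sqq alg (k+1)).2 : ℕ) : ℝ) / 20 ≤ Q alg (Aseq alg) ((sqq alg (k+1)).2) := by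
  have h1 := step_key alg halg (p := sqq alg k) (sqq_entries alg k)
  have h2 : Q alg (Aseq alg) ((sqq alg (k+1)).2) = Q alg ((sqq alg (k+1)).1) ((sqq alg (k+1)).2) :=
    Q_congr alg (fun u hu => Aseq_agree alg hu)
  rw [h2]
  exact h1

end Constr

lemma contra_aux {f : ℕ → ℝ} (h : Tendsto (fun T : ℕ => f T / T) atTop (nhds 0))
    {nk : ℕ → ℕ} (hmono : Tendsto nk atTop atTop) (hpos : ∀ k, 1 ≤ nk k)
    (hfr : ∃ᶠ k in atTop, ((nk k : ℕ) : ℝ) / 20 ≤ f (nk k)) : False := by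
  have hev : ∀ᶠ T in atTop, f T / T < 1/20 :=
    (tendsto_order.1 h).2 (1/20) (by norm_num)
  have hev2 : ∀ᶠ k in atTop, f (nk k) / (nk k) < 1/20 := hmono.eventually hev
  obtain ⟨k, hk1, hk2⟩ := (hfr.and_eventually hev2).exists
  have hn : (0:ℝ) < (nk k : ℝ) := by
    have := hpos k
    exact_mod_cast Nat.lt_of_lt_of_le Nat.zero_lt_one this
  rw [div_lt_iff₀ hn] at hk2
  linarith

/-- Impossibility of simultaneously achieving sublinear NE regret and
sublinear individual regret for both players. For any deterministic algorithm mapping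
histories of `2×2` payoff matrices (entries in `[−1,1]`) to strategy pairs in `Δ₂ × Δ₂`,
there is an adversarial sequence of payoff matrices (entries in `[−1,1]`) on which not all
three regret quantities are `o(T)`. -/
theorem omg_impossibility
    (alg : List (Fin 2 → Fin 2 → ℝ) → (Fin 2 → ℝ) × (Fin 2 → ℝ))
    (halg : ∀ h : List (Fin 2 → Fin 2 → ℝ),
      (alg h).1 ∈ stdSimplex ℝ (Fin 2) ∧ (alg h).2 ∈ stdSimplex ℝ (Fin 2)) :
    ∃ A : ℕ → Fin 2 → Fin 2 → ℝ,
      (∀ t i j, |A t i j| ≤ 1) ∧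
      (let x : ℕ → Fin 2 → ℝ := fun t => (alg ((List.range t).map A)).1
       let y : ℕ → Fin 2 → ℝ := fun t => (alg ((List.range t).map A)).2
       let pay : ℕ → ℝ := fun T => ∑ t ∈ range T, ∑ i, ∑ j, x t i * A t i j * y t j
       let minimax : ℕ → ℝ := fun T =>
         sInf ((fun x' => sSup ((fun y' => ∑ t ∈ range T, ∑ i, ∑ j, x' i * A t i j * y' j)
             '' stdSimplex ℝ (Fin 2))) '' stdSimplex ℝ (Fin 2))
       let reg1 : ℕ → ℝ := fun T =>
         pay T - sInf ((fun x' => ∑ t ∈ range T, ∑ i, ∑ j, x' i * A t i j * y t j)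
             '' stdSimplex ℝ (Fin 2))
       let reg2 : ℕ → ℝ := fun T =>
         sSup ((fun y' => ∑ t ∈ range T, ∑ i, ∑ j, x t i * A t i j * y' j)
             '' stdSimplex ℝ (Fin 2)) - pay T
       ¬ (Tendsto (fun T : ℕ => |pay T - minimax T| / T) atTop (nhds 0) ∧
          Tendsto (fun T : ℕ => reg1 T / T) atTop (nhds 0) ∧
          Tendsto (fun T : ℕ => reg2 T / T) atTop (nhds 0))) := by
  refine ⟨Aseq alg, Aseq_entries alg, ?_⟩
  intro x_ y_ pay_ minimax_ reg1_ reg2_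
  rintro ⟨h1, h2, h3⟩
  have h1' : Tendsto (fun T : ℕ => |pay alg (Aseq alg) T - mmx (Aseq alg) T| / T)
      atTop (nhds 0) := h1
  have h2' : Tendsto (fun T : ℕ => (pay alg (Aseq alg) T - ri1 alg (Aseq alg) T) / T)
      atTop (nhds 0) := h2
  have h3' : Tendsto (fun T : ℕ => (rs2 alg (Aseq alg) T - pay alg (Aseq alg) T) / T)
      atTop (nhds 0) := h3
  set nk : ℕ → ℕ := fun k => (sqq alg (k+1)).2 with hnk
  have hpos : ∀ k, 1 ≤ nk k := fun k =>
    le_trans (by omega : 1 ≤ k + 1) (sqq_len_ge alg (k+1))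
  have hmono : Tendsto nk atTop atTop :=
    tendsto_atTop_mono (fun k => le_trans (by omega : k ≤ k + 1) (sqq_len_ge alg (k+1)))
      tendsto_id
  have hkey : ∀ k, ((nk k : ℕ) : ℝ) / 20 ≤ Q alg (Aseq alg) (nk k) := fun k =>
    sqq_key alg halg k
  have hP : ∀ k, ((nk k : ℕ) : ℝ) / 20 ≤ |pay alg (Aseq alg) (nk k) - mmx (Aseq alg) (nk k)|
      ∨ ((nk k : ℕ) : ℝ) / 20 ≤ pay alg (Aseq alg) (nk k) - ri1 alg (Aseq alg) (nk k)
      ∨ ((nk k : ℕ) : ℝ) / 20 ≤ rs2 alg (Aseq alg) (nk k) - pay alg (Aseq alg) (nk k) := by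
    intro k
    have h := hkey k
    unfold Q at h
    rcases le_max_iff.1 h with h | h
    · exact Or.inl h
    · rcases le_max_iff.1 h with h | h
      · exact Or.inr (Or.inl h)
      · exact Or.inr (Or.inr h)
  have hfreq := Filter.Frequently.of_forall (f := atTop) hP
  rw [Filter.frequently_or_distrib, Filter.frequently_or_distrib] at hfreq
  rcases hfreq with h | h | h
  · exact contra_aux h1' hmono hpos h
  · exact contra_aux h2' hmono hpos h
  · exact contra_aux h3' hmono hpos h

end OMG
end

section
/- In the impossibility construction with A_t = [[1,−1],[−1,1]] for 1 ≤ t ≤ T/2 and A_t = [[1,−1],[1,−1]] for T/2 < t ≤ T, with x_t = [α_t; 1−α_t]: max_{y∈Δ_2} Σ_{t=1}^T x_tᵀA_t y = max{ Σ_{t=1}^{T/2}(2α_t−1) + T/2, Σ_{t=1}^{T/2}(1−2α_t) − T/2 } and min_{x∈Δ_2} max_{y∈Δ_2} Σ_{t=1}^T xᵀA_t y = 0. Consequently max_{y} Σ_t x_tᵀA_t y ≥ T/2 + Σ_{t=1}^{T/2}(2α_t − 1). -/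
open Finset

lemma mem_simplex0 : (fun j : Fin 2 => if j = 0 then (1:ℝ) else 0) ∈ stdSimplex ℝ (Fin 2) := by
  constructor
  · intro i; fin_cases i <;> norm_num
  · simp [Fin.sum_univ_two]

lemma mem_simplex1 : (fun j : Fin 2 => if j = 0 then (0:ℝ) else 1) ∈ stdSimplex ℝ (Fin 2) := by
  constructor
  · intro i; fin_cases i <;> norm_num
  · simp [Fin.sum_univ_two]

lemma sup_aff (c0 c1 : ℝ) :
    sSup ((fun y : Fin 2 → ℝ => c0 * y 0 + c1 * y 1) '' stdSimplex ℝ (Fin 2)) = max c0 c1 := by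
  apply le_antisymm
  · apply csSup_le
    · exact ⟨_, ⟨_, mem_simplex0, rfl⟩⟩
    · rintro z ⟨y, hy, rfl⟩
      have h0 := hy.1 0
      have h1 := hy.1 1
      have hs : y 0 + y 1 = 1 := by simpa [Fin.sum_univ_two] using hy.2
      calc c0 * y 0 + c1 * y 1 ≤ max c0 c1 * y 0 + max c0 c1 * y 1 := by
            gcongr
            · exact le_max_left _ _
            · exact le_max_right _ _
        _ = max c0 c1 := by rw [← mul_add, hs, mul_one]
  · have hb : BddAbove ((fun y : Fin 2 → ℝ => c0 * y 0 + c1 * y 1) '' stdSimplex ℝ (Fin 2)) := by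
      refine ⟨max c0 c1, ?_⟩
      rintro z ⟨y, hy, rfl⟩
      have h0 := hy.1 0
      have h1 := hy.1 1
      have hs : y 0 + y 1 = 1 := by simpa [Fin.sum_univ_two] using hy.2
      calc c0 * y 0 + c1 * y 1 ≤ max c0 c1 * y 0 + max c0 c1 * y 1 := by
            gcongr
            · exact le_max_left _ _
            · exact le_max_right _ _
        _ = max c0 c1 := by rw [← mul_add, hs, mul_one]
    rcases le_total c0 c1 with h | h
    · have := le_csSup hb ⟨_, mem_simplex1, rfl⟩
      simpa [max_eq_right h] using this
    · have := le_csSup hb ⟨_, mem_simplex0, rfl⟩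
      simpa [max_eq_left h] using this

lemma sum_rearrange (n : ℕ) (B : ℕ → Fin 2 → Fin 2 → ℝ) (w : ℕ → Fin 2 → ℝ)
    (y : Fin 2 → ℝ) :
    ∑ t ∈ range n, ∑ i, ∑ j, w t i * B t i j * y j =
      (∑ t ∈ range n, ∑ i, w t i * B t i 0) * y 0 +
      (∑ t ∈ range n, ∑ i, w t i * B t i 1) * y 1 := by
  rw [Finset.sum_mul, Finset.sum_mul, ← Finset.sum_add_distrib]
  refine Finset.sum_congr rfl fun t _ => ?_
  simp only [Fin.sum_univ_two, add_mul]
  ring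

lemma split2m (m : ℕ) (f : ℕ → ℝ) :
    ∑ t ∈ range (2 * m), f t = ∑ t ∈ range m, f t + ∑ t ∈ Ico m (2 * m), f t := by
  rw [range_eq_Ico, range_eq_Ico]
  exact (Finset.sum_Ico_consecutive f (Nat.zero_le m) (by omega : m ≤ 2 * m)).symm

/-- In scenario 2 of the impossibility construction (matching pennies for
`t < T/2`, the matrix `[[1,−1],[1,−1]]` afterwards, `T = 2m`), the best response value of
Player 2 equals `max(∑ (2αₜ−1) + T/2, ∑ (1−2αₜ) − T/2)`, the minimax value of the summed
game is 0, and consequently the best response value is at least `T/2 + ∑ (2αₜ−1)`. -/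
theorem impossibility_scenario_two (m : ℕ) (hm : 0 < m)
    (α : ℕ → ℝ) (hα : ∀ t, α t ∈ Set.Icc (0 : ℝ) 1)
    (A : ℕ → Fin 2 → Fin 2 → ℝ)
    (hA : ∀ t, A t = fun i j =>
      if t < m then (if i = j then (1 : ℝ) else -1) else (if j = 0 then 1 else -1))
    (x : ℕ → Fin 2 → ℝ)
    (hx : ∀ t, x t = fun i => if i = 0 then α t else 1 - α t) :
    sSup ((fun y => ∑ t ∈ range (2 * m), ∑ i, ∑ j, x t i * A t i j * y j)
        '' stdSimplex ℝ (Fin 2)) =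
      max ((∑ t ∈ range m, (2 * α t - 1)) + m) ((∑ t ∈ range m, (1 - 2 * α t)) - m) ∧
    sInf ((fun x' => sSup ((fun y => ∑ t ∈ range (2 * m), ∑ i, ∑ j, x' i * A t i j * y j)
        '' stdSimplex ℝ (Fin 2))) '' stdSimplex ℝ (Fin 2)) = 0 ∧
    (m : ℝ) + (∑ t ∈ range m, (2 * α t - 1)) ≤
      sSup ((fun y => ∑ t ∈ range (2 * m), ∑ i, ∑ j, x t i * A t i j * y j)
        '' stdSimplex ℝ (Fin 2)) := by
  have hcard : (Ico m (2 * m)).card = m := by rw [Nat.card_Ico]; omega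
  -- first goal
  have hc0 : ∑ t ∈ range (2 * m), ∑ i, x t i * A t i 0 =
      (∑ t ∈ range m, (2 * α t - 1)) + m := by
    rw [split2m]
    congr 1
    · refine Finset.sum_congr rfl fun t ht => ?_
      have h := mem_range.mp ht
      simp [hA, hx, Fin.sum_univ_two, h]
      try ring
    · have : ∀ t ∈ Ico m (2 * m), ∑ i, x t i * A t i 0 = 1 := by
        intro t ht
        have h : ¬ t < m := by have := (mem_Ico.mp ht).1; omega
        simp [hA, hx, Fin.sum_univ_two, h]
      rw [Finset.sum_congr rfl this, Finset.sum_const, hcard, nsmul_eq_mul, mul_one]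
  have hc1 : ∑ t ∈ range (2 * m), ∑ i, x t i * A t i 1 =
      (∑ t ∈ range m, (1 - 2 * α t)) - m := by
    rw [split2m]
    have e2 : ∀ t ∈ Ico m (2 * m), ∑ i, x t i * A t i 1 = -1 := by
      intro t ht
      have h : ¬ t < m := by have := (mem_Ico.mp ht).1; omega
      simp [hA, hx, Fin.sum_univ_two, h]
      try ring
    rw [Finset.sum_congr rfl e2, Finset.sum_const, hcard, nsmul_eq_mul, mul_neg_one]
    rw [sub_eq_add_neg]
    congr 1
    refine Finset.sum_congr rfl fun t ht => ?_
    have h := mem_range.mp ht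
    simp [hA, hx, Fin.sum_univ_two, h]
    try ring
  have hfun : (fun y : Fin 2 → ℝ => ∑ t ∈ range (2 * m), ∑ i, ∑ j, x t i * A t i j * y j) =
      fun y => ((∑ t ∈ range m, (2 * α t - 1)) + m) * y 0 +
        ((∑ t ∈ range m, (1 - 2 * α t)) - m) * y 1 := by
    funext y
    rw [sum_rearrange, hc0, hc1]
  have first : sSup ((fun y => ∑ t ∈ range (2 * m), ∑ i, ∑ j, x t i * A t i j * y j)
        '' stdSimplex ℝ (Fin 2)) =
      max ((∑ t ∈ range m, (2 * α t - 1)) + m) ((∑ t ∈ range m, (1 - 2 * α t)) - m) := by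
    rw [hfun, sup_aff]
  -- value of the inner sup for a general strategy x'
  have hval : ∀ x' ∈ stdSimplex ℝ (Fin 2),
      sSup ((fun y => ∑ t ∈ range (2 * m), ∑ i, ∑ j, x' i * A t i j * y j)
        '' stdSimplex ℝ (Fin 2)) = 2 * m * x' 0 := by
    intro x' hx'
    have hs : x' 0 + x' 1 = 1 := by simpa [Fin.sum_univ_two] using hx'.2
    have h0 := hx'.1 0
    have hc0' : ∑ t ∈ range (2 * m), ∑ i, x' i * A t i 0 = 2 * m * x' 0 := by
      rw [split2m]
      have e1 : ∀ t ∈ range m, ∑ i, x' i * A t i 0 = x' 0 - x' 1 := by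
        intro t ht
        have h := mem_range.mp ht
        simp [hA, Fin.sum_univ_two, h]
        ring
      have e2 : ∀ t ∈ Ico m (2 * m), ∑ i, x' i * A t i 0 = 1 := by
        intro t ht
        have h : ¬ t < m := by have := (mem_Ico.mp ht).1; omega
        simp [hA, Fin.sum_univ_two, h]
        linarith
      rw [Finset.sum_congr rfl e1, Finset.sum_congr rfl e2, Finset.sum_const,
        Finset.sum_const, hcard, card_range, nsmul_eq_mul, nsmul_eq_mul]
      have : x' 1 = 1 - x' 0 := by linarith
      rw [this]; ring
    have hc1' : ∑ t ∈ range (2 * m), ∑ i, x' i * A t i 1 = -(2 * m * x' 0) := by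
      rw [split2m]
      have e1 : ∀ t ∈ range m, ∑ i, x' i * A t i 1 = x' 1 - x' 0 := by
        intro t ht
        have h := mem_range.mp ht
        simp [hA, Fin.sum_univ_two, h]
        ring
      have e2 : ∀ t ∈ Ico m (2 * m), ∑ i, x' i * A t i 1 = -1 := by
        intro t ht
        have h : ¬ t < m := by have := (mem_Ico.mp ht).1; omega
        simp [hA, Fin.sum_univ_two, h]
        linarith
      rw [Finset.sum_congr rfl e1, Finset.sum_congr rfl e2, Finset.sum_const,
        Finset.sum_const, hcard, card_range, nsmul_eq_mul, nsmul_eq_mul]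
      have : x' 1 = 1 - x' 0 := by linarith
      rw [this]; ring
    have hfun' : (fun y : Fin 2 → ℝ =>
          ∑ t ∈ range (2 * m), ∑ i, ∑ j, x' i * A t i j * y j) =
        fun y => (2 * m * x' 0) * y 0 + (-(2 * m * x' 0)) * y 1 := by
      funext y
      rw [sum_rearrange, hc0', hc1']
    rw [hfun', sup_aff]
    have hnn : (0:ℝ) ≤ 2 * m * x' 0 := by positivity
    rw [max_eq_left (by linarith)]
  -- second goal
  have second : sInf ((fun x' => sSup ((fun y =>
        ∑ t ∈ range (2 * m), ∑ i, ∑ j, x' i * A t i j * y j)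
        '' stdSimplex ℝ (Fin 2))) '' stdSimplex ℝ (Fin 2)) = 0 := by
    apply le_antisymm
    · apply csInf_le
      · refine ⟨0, ?_⟩
        rintro z ⟨x', hx', rfl⟩
        dsimp only
        rw [hval x' hx']
        have := hx'.1 0
        positivity
      · refine ⟨_, mem_simplex1, ?_⟩
        dsimp only
        rw [hval _ mem_simplex1]
        norm_num
    · apply le_csInf
      · exact ⟨_, ⟨_, mem_simplex1, rfl⟩⟩
      · rintro z ⟨x', hx', rfl⟩
        dsimp only
        rw [hval x' hx']
        have := hx'.1 0
        positivity
  refine ⟨first, second, ?_⟩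
  rw [first]
  calc (m : ℝ) + ∑ t ∈ range m, (2 * α t - 1)
      = (∑ t ∈ range m, (2 * α t - 1)) + m := by ring
    _ ≤ _ := le_max_left _ _
end
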